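/- For relatively prime integers 1 < p < q and any integer n ≥ q, every natural number m that is a multiple of p or of q but not of both, with m ≤ pq, gives: the sequence of such multiples in increasing order, indexed from 0, satisfies: the k-th element equals G̃(k,p,q), i.e., G(G̃(k,p,q), p, q) = k+1 and G(G̃(k,p,q) − 1, p, q) = k, where G(n,p,q) = ⌊n/p⌋ + ⌊n/q⌋ − 2⌊n/(pq)⌋ and G̃(k,p,q) = min{n : G(n,p,q) > k}. -/

import Mathlib

/-- `G(n,p,q) = ⌊n/p⌋ + ⌊n/q⌋ − 2⌊n/(pq)⌋`. -/
def Gfun (n p q : ℕ) : ℕ := n / p + n / q - 2 * (n / (p * q))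

/-- `G̃(k,p,q) = min{n : G(n,p,q) > k}`, the generalized inverse of `G` in `n`. -/
noncomputable def Gtilde (k p q : ℕ) : ℕ := sInf {n : ℕ | k < Gfun n p q}

lemma Gstep (p q : ℕ) (hp : 1 < p) (hq : 1 < q) (hcop : Nat.Coprime p q) (m : ℕ) :
    Gfun (m + 1) p q = Gfun m p q +
      (if (p ∣ (m+1) ∨ q ∣ (m+1)) ∧ ¬(p ∣ (m+1) ∧ q ∣ (m+1)) then 1 else 0) := by
  have hpq : p ∣ (m+1) ∧ q ∣ (m+1) ↔ p * q ∣ (m+1) := by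
    constructor
    · rintro ⟨h1, h2⟩; exact hcop.mul_dvd_of_dvd_of_dvd h1 h2
    · intro h; exact ⟨(dvd_mul_right p q).trans h, (dvd_mul_left q p).trans h⟩
  have h1 : (m+1) / p = m / p + if p ∣ (m+1) then 1 else 0 := Nat.succ_div
  have h2 : (m+1) / q = m / q + if q ∣ (m+1) then 1 else 0 := Nat.succ_div
  have h3 : (m+1) / (p*q) = m / (p*q) + if p*q ∣ (m+1) then 1 else 0 := Nat.succ_div
  have b1 : m / (p*q) ≤ m / p := Nat.div_le_div_left (Nat.le_mul_of_pos_right p (by omega)) (by omega)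
  have b2 : m / (p*q) ≤ m / q := Nat.div_le_div_left (Nat.le_mul_of_pos_left q (by omega)) (by omega)
  unfold Gfun
  rw [h1, h2, h3]
  by_cases hP : p ∣ (m+1) <;> by_cases hQ : q ∣ (m+1) <;>
    simp only [hP, hQ, if_true, if_false, hpq.symm] <;> simp_all <;> omega

lemma Gunbounded (p q k : ℕ) (hp : 1 < p) (hq : 1 < q) :
    k < Gfun ((k+1) * (p*q)) p q := by
  have e1 : (k+1) * (p*q) / p = (k+1) * q := by
    rw [show (k+1) * (p*q) = (k+1) * q * p by ring, Nat.mul_div_cancel _ (by omega)]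
  have e2 : (k+1) * (p*q) / q = (k+1) * p := by
    rw [show (k+1) * (p*q) = (k+1) * p * q by ring, Nat.mul_div_cancel _ (by omega)]
  have e3 : (k+1) * (p*q) / (p*q) = k+1 := Nat.mul_div_cancel _ (by positivity)
  unfold Gfun
  rw [e1, e2, e3]
  have h4 : 2*(k+1) ≤ (k+1)*q := by nlinarith
  have h5 : 2*(k+1) ≤ (k+1)*p := by nlinarith
  omega

/-- For relatively prime `1 < p < q`, the sequence (in increasing order, indexed from `0`)
of natural numbers that are multiples of `p` or of `q` but not of both has as its `k`-th
element exactly `G̃(k,p,q)`: that is, `G̃(k,p,q)` is such a multiple, and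
`G(G̃(k,p,q),p,q) = k+1` while `G(G̃(k,p,q) − 1,p,q) = k`. -/
theorem Gtilde_is_kth_multiple (p q k : ℕ) (hp : 1 < p) (hpq : p < q)
    (hcop : Nat.Coprime p q) :
    ((p ∣ Gtilde k p q ∨ q ∣ Gtilde k p q) ∧ ¬(p ∣ Gtilde k p q ∧ q ∣ Gtilde k p q)) ∧
      Gfun (Gtilde k p q) p q = k + 1 ∧ Gfun (Gtilde k p q - 1) p q = k := by
  have hq : 1 < q := lt_trans hp hpq
  have hne : {n : ℕ | k < Gfun n p q}.Nonempty :=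
    ⟨(k+1) * (p*q), Gunbounded p q k hp hq⟩
  have hmem : k < Gfun (Gtilde k p q) p q := Nat.sInf_mem hne
  have hm0 : Gtilde k p q ≠ 0 := by
    intro h
    rw [h] at hmem
    simp [Gfun, Nat.zero_div] at hmem
  obtain ⟨n, hn⟩ : ∃ n, Gtilde k p q = n + 1 := ⟨Gtilde k p q - 1, by omega⟩
  rw [hn] at hmem ⊢
  have hnot : ¬ (k < Gfun n p q) := by
    have hlt : n < sInf {n : ℕ | k < Gfun n p q} := by
      rw [show sInf {n : ℕ | k < Gfun n p q} = Gtilde k p q from rfl, hn]; omega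
    have := Nat.notMem_of_lt_sInf (s := {n : ℕ | k < Gfun n p q}) hlt
    simpa using this
  have hstep := Gstep p q hp hq hcop n
  simp only [Nat.add_sub_cancel]
  by_cases hc : (p ∣ (n+1) ∨ q ∣ (n+1)) ∧ ¬(p ∣ (n+1) ∧ q ∣ (n+1))
  · rw [if_pos hc] at hstep
    exact ⟨hc, by omega, by omega⟩
  · rw [if_neg hc] at hstep
    omega
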